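/- For nonnegative integers $a$, $n$, $s$ with $s \le n$, one has $\sum_{r=0}^{n-s} (-1)^r \binom{a+r}{2n-s} \binom{n-s}{r} = (-1)^{n-s} \binom{a}{n}$. -/

import Mathlib

lemma aux_fd (n : ℕ) : ∀ (m a : ℕ),
    ∑ r ∈ Finset.range (m + 1),
      (-1 : ℤ) ^ r * ((a + r).choose (n + m)) * (m.choose r)
    = (-1 : ℤ) ^ m * a.choose n := by
  intro m
  induction m with
  | zero => intro a; simp
  | succ m ih =>
    intro a
    have split :
        ∑ r ∈ Finset.range (m + 1 + 1),
          (-1 : ℤ) ^ r * ((a + r).choose (n + (m + 1))) * ((m + 1).choose r)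
        = ∑ r ∈ Finset.range (m + 1),
            ((-1 : ℤ) ^ r * ((a + r).choose (n + m + 1)) * (m.choose r)
             + (-1 : ℤ) ^ (r + 1) * ((a + (r + 1)).choose (n + m + 1)) * (m.choose r)) := by
      rw [Finset.sum_range_succ' _ (m + 1), Finset.sum_add_distrib]
      have h1 : ∀ r, ((m + 1).choose (r + 1) : ℤ) = m.choose r + m.choose (r + 1) := by
        intro r; exact_mod_cast congrArg Nat.cast (Nat.choose_succ_succ m r)
      have e1 : ∑ r ∈ Finset.range (m + 1),
          (-1 : ℤ) ^ (r + 1) * ((a + (r + 1)).choose (n + (m + 1))) * ((m + 1).choose (r + 1))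
          = ∑ r ∈ Finset.range (m + 1),
            ((-1 : ℤ) ^ (r + 1) * ((a + (r + 1)).choose (n + m + 1)) * (m.choose r)
             + (-1 : ℤ) ^ (r + 1) * ((a + (r + 1)).choose (n + m + 1)) * (m.choose (r + 1))) := by
        refine Finset.sum_congr rfl fun r _ => ?_
        rw [h1]; ring_nf
      rw [e1, Finset.sum_add_distrib]
      have e2 : ∑ r ∈ Finset.range (m + 1),
          (-1 : ℤ) ^ (r + 1) * ((a + (r + 1)).choose (n + m + 1)) * (m.choose (r + 1))
          + (-1 : ℤ) ^ 0 * ((a + 0).choose (n + (m + 1))) * ((m + 1).choose 0)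
          = ∑ r ∈ Finset.range (m + 1),
            (-1 : ℤ) ^ r * ((a + r).choose (n + m + 1)) * (m.choose r) := by
        rw [Finset.sum_range_succ]
        conv_rhs => rw [Finset.sum_range_succ']
        simp [Nat.choose_succ_self, Nat.add_assoc]
      rw [add_assoc, e2]
      exact add_comm _ _
    rw [split]
    have e3 : ∑ r ∈ Finset.range (m + 1),
        ((-1 : ℤ) ^ r * ((a + r).choose (n + m + 1)) * (m.choose r)
         + (-1 : ℤ) ^ (r + 1) * ((a + (r + 1)).choose (n + m + 1)) * (m.choose r))
        = ∑ r ∈ Finset.range (m + 1),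
          (-1 : ℤ) * ((-1 : ℤ) ^ r * ((a + r).choose (n + m)) * (m.choose r)) := by
      refine Finset.sum_congr rfl fun r _ => ?_
      have hp : ((a + (r + 1)).choose (n + m + 1) : ℤ)
          = (a + r).choose (n + m) + (a + r).choose (n + m + 1) := by
        have : (a + (r + 1)).choose (n + m + 1) = (a + r).choose (n + m) + (a + r).choose (n + m + 1) := by
          have := Nat.succ_sub_one (n + m)
          rw [show a + (r + 1) = (a + r) + 1 by ring]
          exact Nat.succ_sub_one (n+m) ▸ Nat.choose_succ_succ' (a + r) (n + m) ▸ rfl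
        exact_mod_cast congrArg Nat.cast this
      rw [hp]; ring
    rw [e3, ← Finset.mul_sum, ih a]
    ring

theorem stmt0 (a n s : ℕ) (hs : s ≤ n) :
    ∑ r ∈ Finset.range (n - s + 1),
      (-1 : ℤ) ^ r * ((a + r).choose (2 * n - s)) * ((n - s).choose r)
    = (-1 : ℤ) ^ (n - s) * a.choose n := by
  have h : 2 * n - s = n + (n - s) := by omega
  rw [h]
  exact aux_fd n (n - s) a
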